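/- Let E_h, E_x, E_y, H be finite-dimensional real inner product spaces, f : E_h × E_x × H → E_h a C¹ transition map, g : E_h → E_y a C¹ prediction map, x₁, …, x_L ∈ E_x inputs, targets y₁, …, y_L ∈ E_y, and θ ∈ H. Write fₖ(h) = f(h, xₖ, θ), μ_{j,i} = f_j ∘ ⋯ ∘ fᵢ (identity for j < i), let hⱼ denote the layer-j hidden state, ŷⱼ = g(hⱼ), eⱼ = ŷⱼ − yⱼ, and define the backpropagated errors εᵢ := Σ_{j=i}^{L} D*μ_{j,i+1}(hᵢ) · D*g(hⱼ) · eⱼ for i ∈ {1, …, L} and ε_{L+1} := 0. Then for all i ∈ {1, …, L}, εᵢ = D*f_{i+1}(hᵢ) · ε_{i+1} + D*g(hᵢ) · eᵢ (with the f_{L+1} term vanishing when i = L). -/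

import Mathlib

/-- `muChain f i j = μ_{j,i} = f_j ∘ ⋯ ∘ f_i` for `i ≤ j`, and the identity for `j < i`
(indices are 1-based: `muChain f i 0 = id`). -/
def muChain {E : Type*} (f : ℕ → E → E) (i : ℕ) : ℕ → E → E
  | 0 => id
  | j + 1 => if j + 1 < i then id else f (j + 1) ∘ muChain f i j


theorem muChain_id {E : Type*} (f : ℕ → E → E) (i : ℕ) : ∀ j, j < i →
    muChain f i j = id := by
  intro j
  induction j with
  | zero => intro _; rfl
  | succ n ih => intro h; simp [muChain, h]

theorem muChain_shift {E : Type*} (f : ℕ → E → E) (i : ℕ) (hi : 1 ≤ i) :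
    ∀ j, i ≤ j → muChain f i j = muChain f (i + 1) j ∘ f i := by
  intro j
  induction j with
  | zero => omega
  | succ n ih =>
    intro h
    rcases eq_or_lt_of_le h with h1 | h1
    · have hn : n < i := by omega
      have h2 : ¬ (n + 1 < i) := by omega
      have h3 : n + 1 < i + 1 := by omega
      simp [muChain, h2, h3, muChain_id f i n hn, ← h1]
    · have hn : i ≤ n := by omega
      have h2 : ¬ (n + 1 < i) := by omega
      have h3 : ¬ (n + 1 < i + 1) := by omega
      simp [muChain, h2, h3, ih hn, Function.comp_assoc]

/-- Backpropagation Through Time recurrence.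
With transition `fₖ(h) = f(h, xₖ, θ)`, prediction `g`, hidden states `hⱼ` evolving by
`h_{j+1} = f(hⱼ, x_{j+1}, θ)`, `ŷⱼ = g(hⱼ)`, `eⱼ = ŷⱼ − yⱼ`, and backpropagated errors
`εᵢ = Σ_{j=i}^{L} D*μ_{j,i+1}(hᵢ) · D*g(hⱼ) · eⱼ` (so `ε_{L+1} = 0`, the empty sum),
for all `1 ≤ i ≤ L`: `εᵢ = D*f_{i+1}(hᵢ) · ε_{i+1} + D*g(hᵢ) · eᵢ`. -/
theorem stmt_14
    {Eh Ex Ey H : Type*}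
    [NormedAddCommGroup Eh] [InnerProductSpace ℝ Eh] [FiniteDimensional ℝ Eh]
    [NormedAddCommGroup Ex] [InnerProductSpace ℝ Ex] [FiniteDimensional ℝ Ex]
    [NormedAddCommGroup Ey] [InnerProductSpace ℝ Ey] [FiniteDimensional ℝ Ey]
    [NormedAddCommGroup H] [InnerProductSpace ℝ H] [FiniteDimensional ℝ H]
    (f : Eh × Ex × H → Eh) (g : Eh → Ey)
    (hf : ContDiff ℝ 1 f) (hg : ContDiff ℝ 1 g)
    (L : ℕ) (x : ℕ → Ex) (y : ℕ → Ey) (θ : H)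
    (hseq : ℕ → Eh) (hrec : ∀ j, hseq (j + 1) = f (hseq j, x (j + 1), θ))
    (eps : ℕ → Eh)
    (heps : ∀ i, eps i =
      ∑ j ∈ Finset.Icc i L,
        ContinuousLinearMap.adjoint
          (fderiv ℝ (muChain (fun k h' => f (h', x k, θ)) (i + 1) j) (hseq i))
          (ContinuousLinearMap.adjoint (fderiv ℝ g (hseq j)) (g (hseq j) - y j)))
    (i : ℕ) (hi1 : 1 ≤ i) (hiL : i ≤ L) :
    eps i =
      ContinuousLinearMap.adjoint (fderiv ℝ (fun h' => f (h', x (i + 1), θ)) (hseq i))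
          (eps (i + 1)) +
        ContinuousLinearMap.adjoint (fderiv ℝ g (hseq i)) (g (hseq i) - y i) := by
  set F : ℕ → Eh → Eh := fun k h' => f (h', x k, θ) with hF
  have hdF : ∀ k, Differentiable ℝ (F k) := by
    intro k
    exact (hf.differentiable one_ne_zero).comp
      (differentiable_id.prodMk (differentiable_const _))
  have hdmu : ∀ a j, Differentiable ℝ (muChain F a j) := by
    intro a j
    induction j with
    | zero => exact differentiable_id
    | succ n ih =>
      by_cases h : n + 1 < a
      · simp only [muChain, if_pos h]; exact differentiable_id
      · simp only [muChain, if_neg h]; exact (hdF (n + 1)).comp ih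
  rw [heps i, heps (i + 1)]
  have hsplit : Finset.Icc i L = insert i (Finset.Icc (i + 1) L) := by
    ext n; simp only [Finset.mem_Icc, Finset.mem_insert]; omega
  rw [hsplit, Finset.sum_insert (by simp), map_sum, add_comm]
  congr 1
  · refine Finset.sum_congr rfl fun j hj => ?_
    have hij : i + 1 ≤ j := (Finset.mem_Icc.mp hj).1
    have hshift : muChain F (i + 1) j = muChain F (i + 2) j ∘ F (i + 1) :=
      muChain_shift F (i + 1) (by omega) j hij
    rw [hshift]
    have hcomp : fderiv ℝ (muChain F (i + 2) j ∘ F (i + 1)) (hseq i) =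
        (fderiv ℝ (muChain F (i + 2) j) (hseq (i + 1))) ∘L
          (fderiv ℝ (F (i + 1)) (hseq i)) := by
      rw [hrec i] at *
      exact fderiv_comp (x := hseq i) ((hdmu (i + 2) j) _) ((hdF (i + 1)) _)
    rw [hcomp, ContinuousLinearMap.adjoint_comp]
    rfl
  · -- j = i term
    have h0 : muChain F (i + 1) i = id := muChain_id F (i + 1) i (by omega)
    rw [h0]
    simp [ContinuousLinearMap.adjoint_id]
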